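/- arXiv:1107.5259 — 6 statements merged into one kernel-verified Lean document; each statement's English description precedes it below -/
import Mathlib

section
/- (Sah's lemma for group cohomology, degree 1.) Let G be a group, V an abelian group with a G-action by automorphisms, and g a central element of G such that the map v ↦ g·v − v is a bijection of V. Then every crossed homomorphism c : G → V (i.e. c(xy) = c(x) + x·c(y) for all x, y ∈ G) is principal, i.e. there exists v ∈ V with c(x) = x·v − v for all x ∈ G. -/
/-- Sah's lemma for group cohomology in degree 1. -/
theorem sah_lemma_group_cohomology_one
    {G : Type*} [Group G] {V : Type*} [AddCommGroup V] [DistribMulAction G V]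
    (g : G) (hg : ∀ x : G, g * x = x * g)
    (hbij : Function.Bijective (fun v : V => g • v - v))
    (c : G → V) (hc : ∀ x y : G, c (x * y) = c x + x • c y) :
    ∃ v : V, ∀ x : G, c x = x • v - v := by
  obtain ⟨v, hv⟩ := hbij.2 (c g)
  simp only at hv
  refine ⟨v, fun x => ?_⟩
  apply hbij.1
  simp only
  have h1 := hc g x
  have h2 := hc x g
  rw [hg x] at h1
  have key : g • c x - c x = x • c g - c g := by
    have := h1.symm.trans h2
    linear_combination (norm := abel) this
  rw [key, ← hv]
  simp only [smul_sub, smul_smul, hg x]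
  abel
end

section
/- (Sah's lemma for Lie algebra cohomology, degree 1.) Let 𝔤 be a Lie algebra over a field k, V a 𝔤-module, and x a central element of 𝔤 (i.e. [x,y] = 0 for all y ∈ 𝔤) such that the action map v ↦ x·v is a bijection of V. Then every 1-cocycle c : 𝔤 → V (a k-linear map with c([a,b]) = a·c(b) − b·c(a) for all a,b ∈ 𝔤) is a coboundary, i.e. there exists v ∈ V with c(a) = a·v for all a ∈ 𝔤. -/
/-- Sah's lemma for Lie algebra cohomology in degree 1. -/
theorem sah_lemma_lie_algebra_cohomology_one
    {k : Type*} [Field k] {L : Type*} [LieRing L] [LieAlgebra k L]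
    {V : Type*} [AddCommGroup V] [Module k V] [LieRingModule L V] [LieModule k L V]
    (x : L) (hx : ∀ y : L, ⁅x, y⁆ = 0)
    (hbij : Function.Bijective (fun v : V => ⁅x, v⁆))
    (c : L →ₗ[k] V) (hc : ∀ a b : L, c ⁅a, b⁆ = ⁅a, c b⁆ - ⁅b, c a⁆) :
    ∃ v : V, ∀ a : L, c a = ⁅a, v⁆ := by
  obtain ⟨v, hv⟩ := hbij.2 (c x)
  simp only at hv
  refine ⟨v, fun a => hbij.1 ?_⟩
  simp only
  have h1 : c ⁅x, a⁆ = ⁅x, c a⁆ - ⁅a, c x⁆ := hc x a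
  rw [hx a, map_zero] at h1
  have h2 : ⁅x, ⁅a, v⁆⁆ = ⁅⁅x, a⁆, v⁆ + ⁅a, ⁅x, v⁆⁆ := leibniz_lie x a v
  rw [hx a, zero_lie, zero_add, hv] at h2
  rw [h2]
  exact sub_eq_zero.mp h1.symm
end

section
/- Let k be a field and V a k-vector space with subspaces T ⊆ G ⊆ V. Let W₋₁ = { f ∈ End_k(V) : f(V) ⊆ G, f(G) ⊆ T, f(T) = 0 } and let π_G : V → V/G and π_T : V → V/T be the quotient maps. Then the k-linear map Φ : Hom_k(V/G, G) ⊕ Hom_k(V/T, T) → End_k(V), Φ(f, g) = f ∘ π_G + g ∘ π_T (viewing the values of f and g as elements of V), has image exactly W₋₁, and its kernel is the set of pairs (ι ∘ h, −h ∘ q) for h ∈ Hom_k(V/G, T), where ι : T → G is the inclusion and q : V/T → V/G is the canonical surjection. In particular there is a short exact sequence 0 → Hom_k(V/G, T) → Hom_k(V/G, G) ⊕ Hom_k(V/T, T) → W₋₁ → 0. -/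
/-- The weight-(−1) part of `End(V)` for a two-step filtration `T ⊆ G ⊆ V` is
the quotient of `Hom(V/G, G) ⊕ Hom(V/T, T)` by `Hom(V/G, T)`. -/
theorem weight_minus_one_presentation
    {k V : Type*} [Field k] [AddCommGroup V] [Module k V]
    (T G : Submodule k V) (hTG : T ≤ G)
    (Φ : ((V ⧸ G) →ₗ[k] G) × ((V ⧸ T) →ₗ[k] T) → Module.End k V)
    (hΦ : ∀ p, Φ p = G.subtype ∘ₗ p.1 ∘ₗ G.mkQ + T.subtype ∘ₗ p.2 ∘ₗ T.mkQ)
    (q : (V ⧸ T) →ₗ[k] (V ⧸ G))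
    (hq : ∀ v : V, q (T.mkQ v) = G.mkQ v) :
    Set.range Φ = {f : Module.End k V |
        (∀ v : V, f v ∈ G) ∧ (∀ v ∈ G, f v ∈ T) ∧ (∀ v ∈ T, f v = 0)} ∧
    {p | Φ p = 0} = {p | ∃ h : (V ⧸ G) →ₗ[k] T,
        p.1 = Submodule.inclusion hTG ∘ₗ h ∧ p.2 = -(h ∘ₗ q)} ∧
    Function.Injective (fun h : (V ⧸ G) →ₗ[k] T =>
        ((Submodule.inclusion hTG ∘ₗ h, -(h ∘ₗ q)) :
          ((V ⧸ G) →ₗ[k] G) × ((V ⧸ T) →ₗ[k] T))) := by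
  obtain ⟨s, hs⟩ := G.mkQ.exists_rightInverse_of_surjective
    (LinearMap.range_eq_top.2 G.mkQ_surjective)
  have hsv : ∀ x : V ⧸ G, G.mkQ (s x) = x := fun x => by
    have := congrArg (fun f => f x) hs
    simpa using this
  refine ⟨?_, ?_, ?_⟩
  · ext f
    simp only [Set.mem_range, Set.mem_setOf_eq]
    constructor
    · rintro ⟨p, rfl⟩
      rw [hΦ]
      refine ⟨fun v => ?_, fun v hv => ?_, fun v hv => ?_⟩
      · simp only [LinearMap.add_apply, LinearMap.comp_apply, Submodule.subtype_apply]
        exact G.add_mem (p.1 (G.mkQ v)).2 (hTG (p.2 (T.mkQ v)).2)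
      · have h1 : G.mkQ v = 0 := (Submodule.Quotient.mk_eq_zero G).2 hv
        simp only [LinearMap.add_apply, LinearMap.comp_apply, Submodule.subtype_apply, h1,
          map_zero, Submodule.coe_zero, zero_add]
        exact (p.2 (T.mkQ v)).2
      · have h1 : G.mkQ v = 0 := (Submodule.Quotient.mk_eq_zero G).2 (hTG hv)
        have h2 : T.mkQ v = 0 := (Submodule.Quotient.mk_eq_zero T).2 hv
        simp [LinearMap.comp_apply, h1, h2]
    · rintro ⟨h1, h2, h3⟩
      have hdiff : ∀ v : V, v - s (G.mkQ v) ∈ G := fun v => by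
        rw [← Submodule.Quotient.mk_eq_zero G]
        have : G.mkQ (v - s (G.mkQ v)) = 0 := by
          rw [map_sub, hsv, sub_self]
        simpa using this
      set g1 : (V ⧸ G) →ₗ[k] G :=
        LinearMap.codRestrict G (f ∘ₗ s) (fun x => h1 _) with hg1
      have hmemT : ∀ v : V, f v - f (s (G.mkQ v)) ∈ T := fun v => by
        have := h2 _ (hdiff v)
        rwa [map_sub] at this
      set g2' : V →ₗ[k] T :=
        LinearMap.codRestrict T (f - f ∘ₗ s ∘ₗ G.mkQ) (fun v => hmemT v) with hg2'
      have hker : T ≤ LinearMap.ker g2' := fun v hv => by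
        have h1v : G.mkQ v = 0 := (Submodule.Quotient.mk_eq_zero G).2 (hTG hv)
        have : f v - f (s (G.mkQ v)) = 0 := by
          rw [h1v, map_zero, map_zero, h3 v hv, sub_zero]
        simp only [LinearMap.mem_ker]
        ext
        simpa [hg2'] using this
      have hval : ∀ v : V,
          ((T.liftQ g2' hker) (Submodule.Quotient.mk v) : V) = f v - f (s (G.mkQ v)) :=
        fun v => by rw [Submodule.liftQ_apply]; rfl
      refine ⟨(g1, T.liftQ g2' hker), ?_⟩
      rw [hΦ]
      ext v
      simp only [LinearMap.add_apply, LinearMap.comp_apply, Submodule.subtype_apply,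
        Submodule.mkQ_apply]
      rw [hval v, hg1, LinearMap.codRestrict_apply, LinearMap.comp_apply,
        show (Submodule.Quotient.mk v : V ⧸ G) = G.mkQ v from rfl]
      abel
  · ext p
    simp only [Set.mem_setOf_eq]
    constructor
    · intro hp
      have hv : ∀ v : V, (p.1 (G.mkQ v) : V) + (p.2 (T.mkQ v) : V) = 0 := fun v => by
        have := congrArg (fun f : Module.End k V => f v) (hΦ p ▸ hp)
        simpa using this
      have hmem : ∀ x : V ⧸ G, (p.1 x : V) ∈ T := fun x => by
        obtain ⟨v, rfl⟩ := G.mkQ_surjective x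
        have : (p.1 (G.mkQ v) : V) = -(p.2 (T.mkQ v) : V) :=
          eq_neg_of_add_eq_zero_left (hv v)
        rw [this]
        exact T.neg_mem (p.2 (T.mkQ v)).2
      refine ⟨LinearMap.codRestrict T (G.subtype ∘ₗ p.1) hmem, ?_, ?_⟩
      · ext x
        simp [Submodule.inclusion]
        rfl
      · ext v
        have h2 : (p.2 (T.mkQ v) : V) = -(p.1 (G.mkQ v) : V) :=
          eq_neg_of_add_eq_zero_right (hv v)
        simp only [LinearMap.neg_apply, LinearMap.comp_apply, Submodule.mkQ_apply]
        rw [show Submodule.Quotient.mk v = T.mkQ v from rfl, h2, hq]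
        simp
        rfl
    · rintro ⟨h, hp1, hp2⟩
      rw [hΦ]
      ext v
      simp only [LinearMap.add_apply, LinearMap.comp_apply, Submodule.subtype_apply,
        hp1, hp2, LinearMap.neg_apply, hq, Submodule.coe_neg]
      simp [Submodule.inclusion]
  · intro h h' heq
    have := congrArg Prod.fst heq
    simp only at this
    ext x
    have h2 := congrArg (fun f : (V ⧸ G) →ₗ[k] G => (f (G.mkQ x) : V)) this
    simpa [Submodule.inclusion] using h2
end

section
/- Let R be a ring, V an R-module with submodules T, V', X ⊆ V. Suppose: (i) the image of X in V/T is contained in the image of V' in V/T; (ii) X ∩ T ⊆ V'; and (iii) every R-linear map from X/(X ∩ T) to T/(T ∩ V') is zero. Then X ⊆ V'. -/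
/-- Detection lemma: if the image of `X` mod `T` lies in the image of `V'`,
`X ∩ T ⊆ V'`, and `Hom(X/(X∩T), T/(T∩V')) = 0`, then `X ⊆ V'`. -/
theorem submodule_le_of_graded_conditions
    {R V : Type*} [Ring R] [AddCommGroup V] [Module R V]
    (T V' X : Submodule R V)
    (h1 : ∀ x ∈ X, ∃ v' ∈ V', x - v' ∈ T)
    (h2 : X ⊓ T ≤ V')
    (h3 : ∀ f : (X ⧸ ((X ⊓ T).comap X.subtype)) →ₗ[R]
        (T ⧸ ((T ⊓ V').comap T.subtype)), f = 0) :
    X ≤ V' := by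
  have hXle : X ≤ T ⊔ V' := by
    intro x hx
    obtain ⟨v', hv', ht⟩ := h1 x hx
    have : x = (x - v') + v' := (sub_add_cancel x v').symm
    rw [this]
    exact Submodule.add_mem _ (Submodule.mem_sup_left ht) (Submodule.mem_sup_right hv')
  set Q : Submodule R ↥(T ⊔ V') := V'.comap (T ⊔ V').subtype with hQ
  let g : X →ₗ[R] (↥(T ⊔ V') ⧸ Q) := Q.mkQ ∘ₗ Submodule.inclusion hXle
  have hker : (X ⊓ T).comap X.subtype ≤ LinearMap.ker g := by
    intro x hx
    simp only [Submodule.mem_comap] at hx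
    have hxV' : (x : V) ∈ V' := h2 hx
    simp only [LinearMap.mem_ker, g, LinearMap.comp_apply, Submodule.mkQ_apply,
      Submodule.Quotient.mk_eq_zero, hQ, Submodule.mem_comap]
    exact hxV'
  let F : (X ⧸ ((X ⊓ T).comap X.subtype)) →ₗ[R] (↥(T ⊔ V') ⧸ Q) :=
    ((X ⊓ T).comap X.subtype).liftQ g hker
  let e := LinearMap.quotientInfEquivSupQuotient T V'
  have hF0 : e.symm.toLinearMap ∘ₗ F = 0 := h3 _
  intro x hx
  have h0 : F (Submodule.Quotient.mk ⟨x, hx⟩) = 0 := by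
    have := congrArg (fun f => e ((f : _ →ₗ[R] _) (Submodule.Quotient.mk ⟨x, hx⟩))) hF0
    simp only [LinearMap.comp_apply, LinearMap.zero_apply, LinearEquiv.coe_coe,
      LinearEquiv.apply_symm_apply, map_zero] at this
    exact this
  have : g ⟨x, hx⟩ = 0 := h0
  rw [LinearMap.comp_apply, Submodule.mkQ_apply, Submodule.Quotient.mk_eq_zero] at this
  exact this
end

section
/- Let R be a ring and let 0 → N → E → Q → 0 be a short exact sequence of R-modules. Let N', N'' be submodules of N, and suppose that the quotient extensions 0 → N/N' → E/N' → Q → 0 and 0 → N/N'' → E/N'' → Q → 0 both split, and that Hom_R(Q, N/(N' + N'')) = 0. Then the extension 0 → N/(N' ∩ N'') → E/(N' ∩ N'') → Q → 0 also splits. -/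
/-- If the extension `0 → N → E → Q → 0` splits after quotienting `N` by `N'`
and by `N''`, and `Hom(Q, N/(N'+N'')) = 0`, then it splits after quotienting
by `N' ∩ N''`. -/
theorem splits_inf_of_splits
    {R E : Type*} [Ring R] [AddCommGroup E] [Module R E]
    (N N' N'' : Submodule R E) (hN' : N' ≤ N) (hN'' : N'' ≤ N)
    (hsplit' : ∃ s : (E ⧸ N) →ₗ[R] (E ⧸ N'),
      ∀ x : E ⧸ N, Submodule.mapQ N' N LinearMap.id (by simpa using hN') (s x) = x)
    (hsplit'' : ∃ s : (E ⧸ N) →ₗ[R] (E ⧸ N''),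
      ∀ x : E ⧸ N, Submodule.mapQ N'' N LinearMap.id (by simpa using hN'') (s x) = x)
    (hhom : ∀ f : (E ⧸ N) →ₗ[R] (↥N ⧸ ((N' ⊔ N'').comap N.subtype)), f = 0) :
    ∃ s : (E ⧸ N) →ₗ[R] (E ⧸ (N' ⊓ N'')),
      ∀ x : E ⧸ N,
        Submodule.mapQ (N' ⊓ N'') N LinearMap.id
          (by simpa using inf_le_left.trans hN') (s x) = x := by
  classical
  obtain ⟨s', hs'⟩ := hsplit'
  obtain ⟨s'', hs''⟩ := hsplit''
  set S : Submodule R E := N' ⊔ N'' with hS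
  set K : Submodule R E := N' ⊓ N'' with hK
  -- maps from E⧸N', E⧸N'' to E⧸S
  have hN'S : N' ≤ S := le_sup_left
  have hN''S : N'' ≤ S := le_sup_right
  let q' : (E ⧸ N') →ₗ[R] E ⧸ S :=
    Submodule.mapQ N' S LinearMap.id (by simpa using hN'S)
  let q'' : (E ⧸ N'') →ₗ[R] E ⧸ S :=
    Submodule.mapQ N'' S LinearMap.id (by simpa using hN''S)
  let δ : (E ⧸ N) →ₗ[R] E ⧸ S := q' ∘ₗ s' - q'' ∘ₗ s''
  -- g : N ⧸ comap → E ⧸ S (injective)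
  let g : (↥N ⧸ (S.comap N.subtype)) →ₗ[R] E ⧸ S :=
    Submodule.liftQ (S.comap N.subtype) (S.mkQ.comp N.subtype)
      (fun x hx => by
        simpa [Submodule.mkQ_apply, Submodule.Quotient.mk_eq_zero] using hx)
  have hgker : LinearMap.ker g = ⊥ := by
    apply Submodule.ker_liftQ_eq_bot
    intro x hx
    simpa [Submodule.mkQ_apply, Submodule.Quotient.mk_eq_zero] using hx
  have hg : Function.Injective g := LinearMap.ker_eq_bot.mp hgker
  -- δ lands in range g
  have hδmem : ∀ x : E ⧸ N, δ x ∈ LinearMap.range g := by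
    intro x
    obtain ⟨e, he⟩ := Submodule.Quotient.mk_surjective S (δ x)
    have heN : e ∈ N := by
      -- push δ x to E ⧸ N
      have h1 : Submodule.mapQ S N LinearMap.id (by simp only [Submodule.comap_id]; exact sup_le hN' hN'') (δ x) = 0 := by
        have e1 : Submodule.mapQ S N LinearMap.id (by simp only [Submodule.comap_id]; exact sup_le hN' hN'')
            (q' (s' x)) = x := by
          obtain ⟨a, ha⟩ := Submodule.Quotient.mk_surjective N' (s' x)
          have := hs' x
          rw [← ha] at this ⊢
          simpa [q', Submodule.mapQ_apply] using this
        have e2 : Submodule.mapQ S N LinearMap.id (by simp only [Submodule.comap_id]; exact sup_le hN' hN'')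
            (q'' (s'' x)) = x := by
          obtain ⟨a, ha⟩ := Submodule.Quotient.mk_surjective N'' (s'' x)
          have := hs'' x
          rw [← ha] at this ⊢
          simpa [q'', Submodule.mapQ_apply] using this
        simp [δ, map_sub, e1, e2]
      rw [← he] at h1
      simpa [Submodule.mapQ_apply, Submodule.Quotient.mk_eq_zero] using h1
    exact ⟨Submodule.Quotient.mk ⟨e, heN⟩, by simpa [g] using he⟩
  -- δ factors through g, hence is zero by hhom
  have hδ : ∀ x : E ⧸ N, δ x = 0 := by
    let f : (E ⧸ N) →ₗ[R] (↥N ⧸ (S.comap N.subtype)) :=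
      (LinearEquiv.ofInjective g hg).symm.toLinearMap ∘ₗ
        LinearMap.codRestrict (LinearMap.range g) δ hδmem
    intro x
    have hf : f = 0 := hhom f
    have : g (f x) = δ x := by
      have h2 := congrArg Subtype.val ((LinearEquiv.ofInjective g hg).apply_symm_apply
        (LinearMap.codRestrict (LinearMap.range g) δ hδmem x))
      simpa [f, LinearEquiv.ofInjective_apply] using h2
    rw [← this, hf]
    simp
  -- the fiber-product embedding φ : E⧸K → E⧸N' × E⧸N''
  let φ : (E ⧸ K) →ₗ[R] (E ⧸ N') × (E ⧸ N'') :=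
    LinearMap.prod (Submodule.mapQ K N' LinearMap.id (by simp only [Submodule.comap_id]; exact (inf_le_left : K ≤ N')))
      (Submodule.mapQ K N'' LinearMap.id (by simp only [Submodule.comap_id]; exact (inf_le_right : K ≤ N'')))
  have hφ : Function.Injective φ := by
    rw [← LinearMap.ker_eq_bot]
    rw [LinearMap.ker_eq_bot']
    intro m hm
    obtain ⟨e, rfl⟩ := Submodule.Quotient.mk_surjective K m
    have h1 : (φ (Submodule.Quotient.mk e)).1 = 0 := by rw [hm]; rfl
    have h2 : (φ (Submodule.Quotient.mk e)).2 = 0 := by rw [hm]; rfl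
    simp only [φ, LinearMap.prod_apply, Function.prod, Submodule.mapQ_apply,
      LinearMap.id_coe, id_eq, Submodule.Quotient.mk_eq_zero] at h1 h2
    rw [Submodule.Quotient.mk_eq_zero]
    exact ⟨h1, h2⟩
  let t : (E ⧸ N) →ₗ[R] (E ⧸ N') × (E ⧸ N'') := LinearMap.prod s' s''
  have htmem : ∀ x : E ⧸ N, t x ∈ LinearMap.range φ := by
    intro x
    obtain ⟨e', he'⟩ := Submodule.Quotient.mk_surjective N' (s' x)
    obtain ⟨e'', he''⟩ := Submodule.Quotient.mk_surjective N'' (s'' x)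
    have hdiff : e' - e'' ∈ S := by
      have h0 := hδ x
      rw [show δ x = q' (s' x) - q'' (s'' x) from rfl, ← he', ← he''] at h0
      simp only [q', q'', Submodule.mapQ_apply, LinearMap.id_coe, id_eq] at h0
      rwa [← Submodule.Quotient.mk_sub, Submodule.Quotient.mk_eq_zero] at h0
    rw [hS, Submodule.mem_sup] at hdiff
    obtain ⟨a, ha, b, hb, hab⟩ := hdiff
    refine ⟨Submodule.Quotient.mk (e' - a), ?_⟩
    have hx1 : Submodule.Quotient.mk (p := N') (e' - a) = s' x := by
      rw [← he']
      rw [Submodule.Quotient.eq]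
      simpa using N'.neg_mem ha
    have hx2 : Submodule.Quotient.mk (p := N'') (e' - a) = s'' x := by
      have : e' - a = e'' + b := by
        have : e' - e'' = a + b := hab.symm
        linear_combination (norm := abel) this
      rw [this, ← he'', Submodule.Quotient.eq]
      simpa using hb
    have : φ (Submodule.Quotient.mk (e' - a)) =
        (Submodule.Quotient.mk (p := N') (e' - a),
         Submodule.Quotient.mk (p := N'') (e' - a)) := rfl
    rw [this, hx1, hx2]
    rfl
  -- define the section
  let s : (E ⧸ N) →ₗ[R] (E ⧸ K) :=
    (LinearEquiv.ofInjective φ hφ).symm.toLinearMap ∘ₗ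
      LinearMap.codRestrict (LinearMap.range φ) t htmem
  refine ⟨s, fun x => ?_⟩
  have hφs : φ (s x) = t x := by
    have h2 := congrArg Subtype.val ((LinearEquiv.ofInjective φ hφ).apply_symm_apply
      (LinearMap.codRestrict (LinearMap.range φ) t htmem x))
    simpa [s, LinearEquiv.ofInjective_apply] using h2
  have h1 : Submodule.mapQ K N' LinearMap.id (by simp only [Submodule.comap_id]; exact (inf_le_left : K ≤ N')) (s x)
      = s' x := by
    have := congrArg Prod.fst hφs
    simpa [φ, t] using this
  obtain ⟨y, hy⟩ := Submodule.Quotient.mk_surjective K (s x)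
  rw [← hy] at h1 ⊢
  simp only [Submodule.mapQ_apply, LinearMap.id_coe, id_eq] at h1 ⊢
  have := hs' x
  rw [← h1] at this
  simpa [Submodule.mapQ_apply] using this
end

section
/- Let ℓ be a prime and n a natural number. Every compact subgroup of the additive topological group ℚ_ℓⁿ is a finitely generated ℤ_ℓ-submodule of ℚ_ℓⁿ; in particular it is topologically isomorphic to ℤ_ℓᵐ for some m ≤ n. -/
open Padic

/-- Every compact subgroup of `ℚ_ℓⁿ` is a finitely generated `ℤ_ℓ`-submodule,
and is topologically isomorphic to `ℤ_ℓᵐ` for some `m ≤ n`. -/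
theorem compact_subgroup_of_padic_vector_space
    (ℓ : ℕ) [Fact ℓ.Prime] (n : ℕ)
    (H : AddSubgroup (Fin n → ℚ_[ℓ])) (hH : IsCompact (H : Set (Fin n → ℚ_[ℓ]))) :
    (∃ M : Submodule ℤ_[ℓ] (Fin n → ℚ_[ℓ]), M.FG ∧ M.toAddSubgroup = H) ∧
    ∃ m : ℕ, m ≤ n ∧ ∃ e : H ≃+ (Fin m → ℤ_[ℓ]),
      Continuous e ∧ Continuous e.symm := by
  have hℓ1 : (1:ℝ) < (ℓ:ℝ) := by
    exact_mod_cast (Fact.out : ℓ.Prime).one_lt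
  have hℓ0 : (ℓ : ℚ_[ℓ]) ≠ 0 := by
    exact_mod_cast (Nat.cast_ne_zero (R := ℚ_[ℓ])).mpr (Fact.out : ℓ.Prime).ne_zero
  have hclosed : IsClosed (H : Set (Fin n → ℚ_[ℓ])) := hH.isClosed
  -- Step A: H is stable under ℤ_ℓ-scalar multiplication
  have hsmul : ∀ (c : ℤ_[ℓ]) {x : Fin n → ℚ_[ℓ]}, x ∈ H → c • x ∈ H := by
    intro c x hx
    have hcont : Continuous (fun a : ℤ_[ℓ] => a • x) := by
      apply continuous_pi
      intro i
      have : (fun a : ℤ_[ℓ] => (a • x) i) = fun a : ℤ_[ℓ] => (a : ℚ_[ℓ]) * x i := by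
        funext a
        show a • x i = _
        rw [Algebra.smul_def]; rfl
      rw [this]
      exact (continuous_subtype_val).mul continuous_const
    have hclosed' : IsClosed ((fun a : ℤ_[ℓ] => a • x) ⁻¹' (H : Set (Fin n → ℚ_[ℓ]))) :=
      hclosed.preimage hcont
    have hdense : Dense ((fun a : ℤ_[ℓ] => a • x) ⁻¹' (H : Set (Fin n → ℚ_[ℓ]))) := by
      apply PadicInt.denseRange_intCast.mono
      rintro _ ⟨z, rfl⟩
      show ((z : ℤ_[ℓ])) • x ∈ H
      rw [Int.cast_smul_eq_zsmul]
      exact zsmul_mem hx z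
    have : (fun a : ℤ_[ℓ] => a • x) ⁻¹' (H : Set (Fin n → ℚ_[ℓ])) = Set.univ :=
      hclosed'.closure_eq ▸ (hdense.closure_eq)
    exact (Set.eq_univ_iff_forall.mp this c)
  -- the submodule M with carrier H
  let M : Submodule ℤ_[ℓ] (Fin n → ℚ_[ℓ]) :=
    { carrier := (H : Set (Fin n → ℚ_[ℓ]))
      add_mem' := fun ha hb => add_mem ha hb
      zero_mem' := zero_mem H
      smul_mem' := fun c x hx => hsmul c hx }
  have hMH : M.toAddSubgroup = H := by
    ext x; rfl
  -- Step B: boundedness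
  obtain ⟨C, hC⟩ := (hH.isBounded).exists_norm_le
  obtain ⟨k, hk⟩ := pow_unbounded_of_one_lt C hℓ1
  have hbound : ∀ x ∈ H, ∀ i, ‖x i‖ ≤ (ℓ:ℝ) ^ k := fun x hx i =>
    (norm_le_pi_norm x i).trans ((hC x hx).trans hk.le)
  -- Step C: the linear map L
  set c : ℚ_[ℓ] := ((ℓ : ℚ_[ℓ]) ^ k)⁻¹ with hc_def
  have hck : (ℓ : ℚ_[ℓ]) ^ k ≠ 0 := pow_ne_zero _ hℓ0
  have hc0 : c ≠ 0 := inv_ne_zero hck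
  let L : (Fin n → ℤ_[ℓ]) →ₗ[ℤ_[ℓ]] (Fin n → ℚ_[ℓ]) :=
    { toFun := fun y i => (y i : ℚ_[ℓ]) * c
      map_add' := by
        intro y z; funext i
        simp only [Pi.add_apply, PadicInt.coe_add]; ring
      map_smul' := by
        intro a y; funext i
        show ((a • y) i : ℚ_[ℓ]) * c = a • (fun i => (y i : ℚ_[ℓ]) * c) i
        show ((a * y i : ℤ_[ℓ]) : ℚ_[ℓ]) * c = a • ((y i : ℚ_[ℓ]) * c)
        rw [Algebra.smul_def]
        push_cast
        show _ = (a : ℚ_[ℓ]) * _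
        ring }
  have hLinj : Function.Injective L := by
    intro y z h
    funext i
    have := congrFun h i
    exact Subtype.coe_injective (mul_right_cancel₀ hc0 this)
  have hrange : M ≤ LinearMap.range L := by
    intro x hx
    have hx' : x ∈ H := hx
    refine ⟨fun i => ⟨x i * (ℓ : ℚ_[ℓ]) ^ k, ?_⟩, ?_⟩
    · show ‖x i * (ℓ : ℚ_[ℓ]) ^ k‖ ≤ 1
      rw [norm_mul, norm_pow, Padic.norm_p]
      calc ‖x i‖ * ((ℓ:ℝ)⁻¹) ^ k ≤ (ℓ:ℝ) ^ k * ((ℓ:ℝ)⁻¹) ^ k := by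
            apply mul_le_mul_of_nonneg_right (hbound x hx' i) (by positivity)
        _ = 1 := by
            rw [← mul_pow, mul_inv_cancel₀ (by positivity), one_pow]
    · funext i
      show x i * (ℓ : ℚ_[ℓ]) ^ k * c = x i
      rw [hc_def, mul_assoc, mul_inv_cancel₀ hck, mul_one]
  -- Step D: the submodule upstairs and its basis
  obtain ⟨m, b⟩ := Submodule.basisOfPid (Pi.basisFun ℤ_[ℓ] (Fin n)) (M.comap L)
  have hmn : m ≤ n := by
    have li : LinearIndependent ℤ_[ℓ] (fun i => ((b i : Fin n → ℤ_[ℓ]))) :=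
      b.linearIndependent.map' (M.comap L).subtype (Submodule.ker_subtype _)
    have := li.fintype_card_le_finrank
    simpa [Module.finrank_fin_fun] using this
  have hmap : Submodule.map L (M.comap L) = M := Submodule.map_comap_eq_self hrange
  let eMap : (M.comap L) ≃ₗ[ℤ_[ℓ]] M :=
    (Submodule.equivMapOfInjective L hLinj (M.comap L)).trans (LinearEquiv.ofEq _ _ hmap)
  let bM : Module.Basis (Fin m) ℤ_[ℓ] M := b.map eMap
  have hFG : M.FG := Module.Finite.iff_fg.mp (Module.Finite.of_basis bM)
  refine ⟨⟨M, hFG, hMH⟩, m, hmn, ?_⟩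
  -- Step F: the topological isomorphism
  let φ : (Fin m → ℤ_[ℓ]) ≃ₗ[ℤ_[ℓ]] M := bM.equivFun.symm
  have hφcont : Continuous fun v : Fin m → ℤ_[ℓ] => (φ v : Fin n → ℚ_[ℓ]) := by
    have heq : (fun v : Fin m → ℤ_[ℓ] => (φ v : Fin n → ℚ_[ℓ])) =
        fun v => ∑ i, (v i : ℚ_[ℓ]) • (bM i : Fin n → ℚ_[ℓ]) := by
      funext v
      show ((bM.equivFun.symm v : M) : Fin n → ℚ_[ℓ]) = _
      rw [Module.Basis.equivFun_symm_apply]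
      push_cast
      refine Finset.sum_congr rfl fun i _ => ?_
      show ((v i • bM i : M) : Fin n → ℚ_[ℓ]) = _
      rw [Submodule.coe_smul]
      rw [← algebraMap_smul ℚ_[ℓ] (v i) ((bM i : Fin n → ℚ_[ℓ]))]
      rfl
    rw [heq]
    apply continuous_finset_sum
    intro i _
    exact ((continuous_subtype_val).comp (continuous_apply (A := fun _ : Fin m => ℤ_[ℓ]) i)).smul continuous_const
  -- the forward additive equivalence, from ℤ_ℓ^m to H
  let ψ : (Fin m → ℤ_[ℓ]) ≃+ H :=
    { toFun := fun v => ⟨(φ v : Fin n → ℚ_[ℓ]), (φ v).2⟩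
      invFun := fun x => φ.symm ⟨(x : Fin n → ℚ_[ℓ]), x.2⟩
      left_inv := fun v => by simp
      right_inv := fun x => by
        apply Subtype.ext
        show ((φ (φ.symm ⟨(x : Fin n → ℚ_[ℓ]), x.2⟩) : M) : Fin n → ℚ_[ℓ]) = x
        rw [φ.apply_symm_apply]
      map_add' := fun v w => by
        apply Subtype.ext
        show ((φ (v + w) : M) : Fin n → ℚ_[ℓ]) = ((φ v : M) : Fin n → ℚ_[ℓ]) + _
        rw [map_add]; rfl }
  have hψcont : Continuous ψ := by
    apply Continuous.subtype_mk hφcont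
  have : CompactSpace (Fin m → ℤ_[ℓ]) := inferInstance
  let homeo : (Fin m → ℤ_[ℓ]) ≃ₜ H := hψcont.homeoOfEquivCompactToT2 (f := ψ.toEquiv)
  exact ⟨ψ.symm, homeo.symm.continuous, hψcont⟩
end
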